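/- Let λ_1,…,λ_p and δ_1,…,δ_p be real numbers with empirical distributions μ = p^{-1}∑δ_{λ_i} and ν = p^{-1}∑δ_{δ_i}. Then for any α > 0, d_L(μ,ν)^{α+1} ≤ min_π (1/p)∑_{k=1}^p |λ_k − δ_{π(k)}|^α, where the minimum is over permutations π of {1,…,p}. -/
import Mathlib

open MeasureTheory Finset

/-- Lévy distance between two measures on ℝ. -/
noncomputable def levyDist (μ ν : Measure ℝ) : ℝ :=
  sInf {ε : ℝ | 0 < ε ∧ ∀ x : ℝ,
    (μ (Set.Iic (x - ε))).toReal - ε ≤ (ν (Set.Iic x)).toReal ∧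
    (ν (Set.Iic x)).toReal ≤ (μ (Set.Iic (x + ε))).toReal + ε}

/-- Empirical distribution of a finite family of real numbers. -/
noncomputable def empDist {p : ℕ} (lam : Fin p → ℝ) : Measure ℝ :=
  ((p : ENNReal))⁻¹ • ∑ i : Fin p, Measure.dirac (lam i)

lemma empDist_Iic {p : ℕ} (lam : Fin p → ℝ) (x : ℝ) :
    ((empDist lam) (Set.Iic x)).toReal
      = ((Finset.univ.filter fun i => lam i ≤ x).card : ℝ) / p := by
  have hmeas : MeasurableSet (Set.Iic x) := measurableSet_Iic
  rw [empDist, Measure.smul_apply, Measure.finset_sum_apply]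
  have : ∀ i : Fin p, Measure.dirac (lam i) (Set.Iic x)
      = if lam i ≤ x then (1 : ENNReal) else 0 := by
    intro i
    rw [Measure.dirac_apply' _ hmeas]
    simp [Set.indicator_apply]
  simp_rw [this]
  rw [Finset.sum_boole]
  simp [ENNReal.toReal_mul, div_eq_inv_mul]

lemma card_filter_perm {p : ℕ} (π : Equiv.Perm (Fin p)) (P : Fin p → Prop) [DecidablePred P] :
    ((Finset.univ.filter fun i => P (π i)).card) = (Finset.univ.filter P).card := by
  apply Finset.card_bij' (fun i _ => π i) (fun j _ => π.symm j) <;> simp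

lemma cdf_bound {p : ℕ} (hp : 0 < p) (f g : Fin p → ℝ) (α ε : ℝ) (hα : 0 < α) (hε : 0 < ε)
    (hsum : ∑ k, |f k - g k| ^ α ≤ (p : ℝ) * ε ^ (α + 1)) (x : ℝ) :
    ((Finset.univ.filter fun i => f i ≤ x).card : ℝ) / p
      ≤ ((Finset.univ.filter fun i => g i ≤ x + ε).card : ℝ) / p + ε := by
  have hp' : (0 : ℝ) < p := by exact_mod_cast hp
  set A := Finset.univ.filter fun i => f i ≤ x with hA
  set B := Finset.univ.filter fun i => g i ≤ x + ε with hB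
  set C := Finset.univ.filter fun i : Fin p => ε < |f i - g i| with hC
  have hsub : A ⊆ B ∪ C := by
    intro i hi
    simp only [hA, Finset.mem_filter, Finset.mem_univ, true_and] at hi
    by_cases h : ε < |f i - g i|
    · exact Finset.mem_union_right _ (by simp [hC, h])
    · push_neg at h
      refine Finset.mem_union_left _ ?_
      have := abs_le.mp h
      simp only [hB, Finset.mem_filter, Finset.mem_univ, true_and]
      linarith [this.1, this.2]
  have hcard : (A.card : ℝ) ≤ B.card + C.card := by
    have := (Finset.card_le_card hsub).trans (Finset.card_union_le B C)
    exact_mod_cast this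
  -- bound on C.card
  have hterm : ∀ i ∈ C, ε ^ α ≤ |f i - g i| ^ α := by
    intro i hi
    simp only [hC, Finset.mem_filter] at hi
    exact Real.rpow_le_rpow hε.le hi.2.le hα.le
  have h1 : (C.card : ℝ) * ε ^ α ≤ ∑ i ∈ C, |f i - g i| ^ α := by
    have := Finset.card_nsmul_le_sum C (fun i => |f i - g i| ^ α) (ε ^ α) hterm
    simpa [nsmul_eq_mul] using this
  have h2 : ∑ i ∈ C, |f i - g i| ^ α ≤ ∑ k, |f k - g k| ^ α := by
    apply Finset.sum_le_sum_of_subset_of_nonneg (Finset.subset_univ C)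
    intro i _ _
    exact Real.rpow_nonneg (abs_nonneg _) _
  have hεα : (0 : ℝ) < ε ^ α := Real.rpow_pos_of_pos hε _
  have hsplit : ε ^ (α + 1) = ε ^ α * ε := by
    rw [Real.rpow_add hε, Real.rpow_one]
  have hCcard : (C.card : ℝ) ≤ p * ε := by
    have h3 : (C.card : ℝ) * ε ^ α ≤ (p * ε) * ε ^ α := by
      calc (C.card : ℝ) * ε ^ α ≤ ∑ k, |f k - g k| ^ α := h1.trans h2
        _ ≤ (p : ℝ) * ε ^ (α + 1) := hsum
        _ = (p * ε) * ε ^ α := by rw [hsplit]; ring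
    exact le_of_mul_le_mul_right h3 hεα
  have hBC : (B.card : ℝ) / p + (C.card : ℝ) / p ≤ (B.card : ℝ) / p + ε := by
    gcongr
    rw [div_le_iff₀ hp']
    linarith [hCcard]
  calc (A.card : ℝ) / p ≤ ((B.card : ℝ) + C.card) / p := by gcongr
    _ = (B.card : ℝ) / p + (C.card : ℝ) / p := by ring
    _ ≤ (B.card : ℝ) / p + ε := hBC

/-- Theorem A.38 of Bai–Silverstein: for any α > 0,
d_L(μ,ν)^{α+1} ≤ min_π (1/p)∑ |λ_k − δ_{π(k)}|^α over permutations π. -/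
theorem levy_pow_le_min_perm {p : ℕ} (hp : 0 < p)
    (lam delta : Fin p → ℝ) (α : ℝ) (hα : 0 < α) :
    levyDist (empDist lam) (empDist delta) ^ (α + 1) ≤
      ⨅ π : Equiv.Perm (Fin p), (1 / (p : ℝ)) * ∑ k, |lam k - delta (π k)| ^ α := by
  have hp' : (0 : ℝ) < p := by exact_mod_cast hp
  apply le_ciInf
  intro π
  set S := (1 / (p : ℝ)) * ∑ k, |lam k - delta (π k)| ^ α with hSdef
  have hsum_nonneg : (0 : ℝ) ≤ ∑ k, |lam k - delta (π k)| ^ α :=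
    Finset.sum_nonneg fun i _ => Real.rpow_nonneg (abs_nonneg _) _
  have hS0 : 0 ≤ S := by
    apply mul_nonneg (by positivity) hsum_nonneg
  set ε := S ^ (α + 1)⁻¹ with hεdef
  have hε0 : 0 ≤ ε := Real.rpow_nonneg hS0 _
  have hεS : ε ^ (α + 1) = S := Real.rpow_inv_rpow hS0 (by positivity)
  -- the Lévy set is nonempty and bounded below
  have hset_nonneg : ∀ y ∈ {ε : ℝ | 0 < ε ∧ ∀ x : ℝ,
      ((empDist lam) (Set.Iic (x - ε))).toReal - ε ≤ ((empDist delta) (Set.Iic x)).toReal ∧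
      ((empDist delta) (Set.Iic x)).toReal ≤ ((empDist lam) (Set.Iic (x + ε))).toReal + ε},
      (0 : ℝ) ≤ y := fun y hy => hy.1.le
  have hd0 : 0 ≤ levyDist (empDist lam) (empDist delta) :=
    Real.sInf_nonneg hset_nonneg
  have hdε : levyDist (empDist lam) (empDist delta) ≤ ε := by
    apply le_of_forall_gt_imp_ge_of_dense
    intro ε' hε'
    have hε'0 : 0 < ε' := lt_of_le_of_lt hε0 hε'
    apply csInf_le ⟨0, hset_nonneg⟩
    refine ⟨hε'0, fun x => ?_⟩
    have hsum' : ∑ k, |lam k - delta (π k)| ^ α ≤ (p : ℝ) * ε' ^ (α + 1) := by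
      have h1 : ∑ k, |lam k - delta (π k)| ^ α = (p : ℝ) * S := by
        rw [hSdef]; field_simp
      have h2 : ε ^ (α + 1) ≤ ε' ^ (α + 1) :=
        Real.rpow_le_rpow hε0 hε'.le (by positivity)
      rw [h1, ← hεS]
      exact mul_le_mul_of_nonneg_left h2 hp'.le
    constructor
    · -- F_mu(x - ε') - ε' ≤ F_nu(x)
      rw [empDist_Iic, empDist_Iic]
      have key := cdf_bound hp lam (fun i => delta (π i)) α ε' hα hε'0 hsum' (x - ε')
      have hperm : ((Finset.univ.filter fun i => delta (π i) ≤ x - ε' + ε').card : ℝ)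
          = ((Finset.univ.filter fun i => delta i ≤ x).card : ℝ) := by
        have : (x - ε' + ε') = x := by ring
        rw [this]
        exact_mod_cast card_filter_perm π (fun i => delta i ≤ x)
      rw [hperm] at key
      linarith [key]
    · -- F_nu(x) ≤ F_mu(x + ε') + ε'
      rw [empDist_Iic, empDist_Iic]
      have hsum'' : ∑ k, |(fun i => delta (π i)) k - lam k| ^ α ≤ (p : ℝ) * ε' ^ (α + 1) := by
        simpa [abs_sub_comm] using hsum'
      have key := cdf_bound hp (fun i => delta (π i)) lam α ε' hα hε'0 hsum'' x
      have hperm : ((Finset.univ.filter fun i => delta (π i) ≤ x).card : ℝ)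
          = ((Finset.univ.filter fun i => delta i ≤ x).card : ℝ) := by
        exact_mod_cast card_filter_perm π (fun i => delta i ≤ x)
      rw [hperm] at key
      linarith [key]
  calc levyDist (empDist lam) (empDist delta) ^ (α + 1)
      ≤ ε ^ (α + 1) := Real.rpow_le_rpow hd0 hdε (by positivity)
    _ = S := hεS
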